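/- arXiv:2004.11128 — 2 statements merged into one kernel-verified Lean document; each statement's English description precedes it below -/
import Mathlib

section
/- The weighted Euler curve is the pointwise sum over weight levels of ordinary Euler curves: for admissible g, χʷ_{p_v}(r) = Σ_{z≥1} χ_{p_v restricted to g⁻¹([z,∞))}(r), where χ_f(r) denotes the ordinary Euler characteristic of the sublevel complex f⁻¹((-∞,r]). Consequently, WECT_{K,g}(v,r) = Σ_{z≥1} ECT_{g⁻¹([z,∞))}(v,r). -/
open Finset
open scoped Classical

/-- Height of a simplex (given by its vertex set) in direction `v`:
the maximum of `⟪v, x⟫` over the vertices `x`. -/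
noncomputable def hght {d : ℕ} (v : EuclideanSpace ℝ (Fin d))
    (σ : Finset (EuclideanSpace ℝ (Fin d))) : ℝ :=
  sSup ((fun x => (inner ℝ v x : ℝ)) '' (σ : Set (EuclideanSpace ℝ (Fin d))))

/-- The weighted Euler curve value at `r`: weighted Euler characteristic of the
sublevel complex of the height filtration. -/
noncomputable def wec {d : ℕ} (K : Finset (Finset (EuclideanSpace ℝ (Fin d))))
    (g : Finset (EuclideanSpace ℝ (Fin d)) → ℕ)
    (v : EuclideanSpace ℝ (Fin d)) (r : ℝ) : ℤ :=
  ∑ σ ∈ K.filter (fun σ => hght v σ ≤ r), (-1 : ℤ) ^ (σ.card - 1) * (g σ : ℤ)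

/-- The weighted Euler curve is the sum over weight levels of the ordinary Euler
curves of the superlevel subcomplexes. -/
theorem wec_eq_sum_ect {d : ℕ}
    (K : Finset (Finset (EuclideanSpace ℝ (Fin d))))
    (hne : ∀ σ ∈ K, σ.Nonempty)
    (hK : ∀ σ ∈ K, ∀ τ : Finset (EuclideanSpace ℝ (Fin d)),
      τ ⊆ σ → τ.Nonempty → τ ∈ K)
    (g : Finset (EuclideanSpace ℝ (Fin d)) → ℕ)
    (hpos : ∀ σ ∈ K, 1 ≤ g σ)
    (hadm : ∀ σ ∈ K, ∀ τ ∈ K, τ ⊆ σ → g σ ≤ g τ)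
    (v : EuclideanSpace ℝ (Fin d)) (hv : ‖v‖ = 1) (r : ℝ) :
    wec K g v r =
      ∑ z ∈ Finset.Icc 1 (K.sup g),
        ∑ σ ∈ K.filter (fun σ => z ≤ g σ ∧ hght v σ ≤ r),
          (-1 : ℤ) ^ (σ.card - 1) := by
  unfold wec
  rw [Finset.sum_filter]
  conv_rhs => rw [Finset.sum_congr rfl (fun z _ => Finset.sum_filter _ _)]
  rw [Finset.sum_comm]
  refine Finset.sum_congr rfl ?_
  intro σ hσ
  by_cases hr : hght v σ ≤ r
  · simp only [hr, and_true, if_true]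
    rw [← Finset.sum_filter]
    have hfil : (Finset.Icc 1 (K.sup g)).filter (fun z => z ≤ g σ)
        = Finset.Icc 1 (g σ) := by
      ext z
      simp only [Finset.mem_filter, Finset.mem_Icc]
      constructor
      · rintro ⟨⟨h1, _⟩, h2⟩; exact ⟨h1, h2⟩
      · rintro ⟨h1, h2⟩; exact ⟨⟨h1, h2.trans (Finset.le_sup hσ)⟩, h2⟩
    rw [hfil, Finset.sum_const, Nat.card_Icc]
    simp [mul_comm]
  · simp [hr]
end

section
/- The WECT is equivariant under rotations: if R ∈ SO(d) and (K,g) is a weighted simplicial complex in ℝ^d, then for the rotated complex RK (with weight g∘R⁻¹ on rotated simplices) one has WECT_{RK, g∘R⁻¹}(v, r) = WECT_{K,g}(R⁻¹v, r) for all v ∈ S^{d-1}, r ∈ ℝ. -/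
open Finset
open scoped Classical

/-- Rotation equivariance of the WECT. -/
theorem wect_rotation_equivariant {d : ℕ}
    (K : Finset (Finset (EuclideanSpace ℝ (Fin d))))
    (hne : ∀ σ ∈ K, σ.Nonempty)
    (g : Finset (EuclideanSpace ℝ (Fin d)) → ℕ)
    (R : EuclideanSpace ℝ (Fin d) ≃ₗᵢ[ℝ] EuclideanSpace ℝ (Fin d))
    (v : EuclideanSpace ℝ (Fin d)) (hv : ‖v‖ = 1) (r : ℝ) :
    wec (K.image (fun σ => σ.image R))
      (fun τ => g (τ.image R.symm)) v r
      = wec K g (R.symm v) r := by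
  have hh : ∀ σ : Finset (EuclideanSpace ℝ (Fin d)),
      hght v (σ.image R) = hght (R.symm v) σ := by
    intro σ
    unfold hght
    congr 1
    rw [Finset.coe_image, Set.image_image]
    refine Set.image_congr fun x _ => ?_
    rw [← R.inner_map_map (R.symm v) x, R.apply_symm_apply]
  unfold wec
  rw [Finset.filter_image, Finset.sum_image]
  · apply Finset.sum_congr
    · ext σ
      simp [hh σ]
    · intro σ hσ
      rw [Finset.card_image_of_injective _ R.injective]
      congr 1
      simp [Finset.image_image]
  · intro a _ b _ hab
    have := congrArg (Finset.image R.symm) hab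
    simpa [Finset.image_image] using this
end
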